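/- Let r,t be integers with 0 < r < t and t − r even, and let b, c be positive real numbers. With η(m) = ⌊m/t⌋ + ⌊(m − (t−r)/2)/(t−r)⌋ − ⌊(m − (t−r))/(t−r)⌋, φ(m) = η(m+r−t) − η(m), μ(m) = 2·⌊(m+t)/(2t)⌋, μ'(m) = 2·⌊m/(2t)⌋ + 1, ψ(m) = μ(m+r−t) − μ(m) and ψ'(m) = μ'(m+r−t) − μ'(m), for every m ∈ ℤ one has ((b²+c²)/2)^φ(m) / (2·b^ψ(m)·c^ψ'(m)) + ((b²+c²)/2)^φ(m) / (2·c^ψ(m)·b^ψ'(m)) = 1, where powers of positive reals with integer exponents are used. (The two summands are the coefficients ℒ and ℛ = 1 − ℒ of the linearized T-system with 2×2-periodic (r,r,t)-slanted initial data; the identity expresses ℒ + ℛ = 1.) -/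
import Mathlib

private lemma fdq (a n : ℤ) (hn : 0 < n) : ⌊(a : ℚ) / (n : ℚ)⌋ = a / n := by
  lift n to ℕ using hn.le
  exact_mod_cast Rat.floor_intCast_div_natCast a n

private lemma ediv_shift (x n : ℤ) (hn : n ≠ 0) : (x - n) / n = x / n - 1 := by
  have h := Int.add_mul_ediv_right x (-1) hn
  have hx : x + -1 * n = x - n := by ring
  rw [hx] at h
  omega

private lemma ediv_diff (x s n : ℤ) (hn : 0 < n) (hs0 : 0 < s) (hsn : s ≤ n) :
    x / n - 1 ≤ (x - s) / n ∧ (x - s) / n ≤ x / n := by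
  constructor
  · have h := Int.add_mul_ediv_right (x - s) 1 hn.ne'
    have hle : x ≤ x - s + 1 * n := by omega
    have := Int.ediv_le_ediv hn hle
    omega
  · exact Int.ediv_le_ediv hn (by omega)

private lemma hermite (x t : ℤ) (ht : 0 < t) :
    x / (2 * t) + (x + t) / (2 * t) = x / t := by
  have h2t : (0:ℤ) < 2 * t := by omega
  obtain ⟨q, rr, hx, hr0, hr1⟩ : ∃ q rr, x = rr + q * (2 * t) ∧ 0 ≤ rr ∧ rr < 2 * t := by
    refine ⟨x / (2 * t), x % (2 * t), ?_, Int.emod_nonneg x h2t.ne', Int.emod_lt_of_pos x h2t⟩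
    have := Int.emod_add_mul_ediv x (2 * t)
    linarith
  subst hx
  rw [Int.add_mul_ediv_right rr q h2t.ne',
      Int.ediv_eq_zero_of_lt hr0 hr1]
  have h1 : rr + q * (2 * t) + t = rr + t + q * (2 * t) := by ring
  rw [h1, Int.add_mul_ediv_right (rr + t) q h2t.ne']
  have h2 : rr + q * (2 * t) = rr + 2 * q * t := by ring
  rw [h2, Int.add_mul_ediv_right rr (2 * q) ht.ne']
  have key : (rr + t) / (2 * t) = rr / t := by
    rcases lt_or_ge rr t with h | h
    · rw [Int.ediv_eq_zero_of_lt (by omega) (by omega),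
          Int.ediv_eq_zero_of_lt hr0 h]
    · have e1 : rr + t = rr - t + 1 * (2 * t) := by ring
      have e2 : rr = rr - t + 1 * t := by ring
      rw [e1, Int.add_mul_ediv_right _ 1 h2t.ne',
          Int.ediv_eq_zero_of_lt (by omega) (by omega)]
      conv_rhs => rw [e2]
      rw [Int.add_mul_ediv_right _ 1 ht.ne',
          Int.ediv_eq_zero_of_lt (by omega) (by omega)]
  omega

/-- the identity `ℒ + ℛ = 1` for the coefficients of the linearized T-system
with 2×2-periodic (r,r,t)-slanted initial data:
`((b²+c²)/2)^φ(m) / (2 b^ψ(m) c^ψ'(m)) + ((b²+c²)/2)^φ(m) / (2 c^ψ(m) b^ψ'(m)) = 1`. -/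
theorem L_plus_R_eq_one
    (r t : ℤ) (hr0 : 0 < r) (hrt : r < t) (heven : Even (t - r))
    (b c : ℝ) (hb : 0 < b) (hc : 0 < c)
    (η φ μ μ' ψ ψ' : ℤ → ℤ)
    (hη : ∀ m : ℤ,
      η m = ⌊((m : ℤ) : ℚ) / ((t : ℤ) : ℚ)⌋
          + ⌊((m - (t - r) / 2 : ℤ) : ℚ) / ((t - r : ℤ) : ℚ)⌋
          - ⌊((m - (t - r) : ℤ) : ℚ) / ((t - r : ℤ) : ℚ)⌋)
    (hφ : ∀ m : ℤ, φ m = η (m + r - t) - η m)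
    (hμ : ∀ m : ℤ, μ m = 2 * ⌊((m + t : ℤ) : ℚ) / ((2 * t : ℤ) : ℚ)⌋)
    (hμ' : ∀ m : ℤ, μ' m = 2 * ⌊((m : ℤ) : ℚ) / ((2 * t : ℤ) : ℚ)⌋ + 1)
    (hψ : ∀ m : ℤ, ψ m = μ (m + r - t) - μ m)
    (hψ' : ∀ m : ℤ, ψ' m = μ' (m + r - t) - μ' m) :
    ∀ m : ℤ,
      ((b ^ 2 + c ^ 2) / 2) ^ φ m / (2 * b ^ ψ m * c ^ ψ' m)
        + ((b ^ 2 + c ^ 2) / 2) ^ φ m / (2 * c ^ ψ m * b ^ ψ' m) = 1 := by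
  intro m
  set s : ℤ := t - r with hs
  have hs0 : 0 < s := by omega
  have hst : s < t := by omega
  have ht0 : 0 < t := by omega
  have h2t : (0:ℤ) < 2 * t := by omega
  -- rewrite floors as ediv
  have hη' : ∀ x : ℤ, η x = x / t + (x - s / 2) / s - (x - s) / s := by
    intro x
    rw [hη x, fdq _ _ ht0, fdq _ _ hs0, fdq _ _ hs0]
  have hμe : ∀ x : ℤ, μ x = 2 * ((x + t) / (2 * t)) := by
    intro x; rw [hμ x, fdq _ _ h2t]
  have hμ'e : ∀ x : ℤ, μ' x = 2 * (x / (2 * t)) + 1 := by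
    intro x; rw [hμ' x, fdq _ _ h2t]
  have hms : m + r - t = m - s := by omega
  -- φ m = (m-s)/t - m/t
  have hφm : φ m = (m - s) / t - m / t := by
    rw [hφ m, hms, hη' (m - s), hη' m]
    have e1 : m - s - s / 2 = (m - s / 2) - s := by omega
    have e2 : m - s - s = (m - s) - s := by ring
    rw [e1, e2, ediv_shift (m - s / 2) s hs0.ne', ediv_shift (m - s) s hs0.ne']
    ring
  have hψm : ψ m = 2 * ((m - s + t) / (2 * t)) - 2 * ((m + t) / (2 * t)) := by
    rw [hψ m, hms, hμe, hμe]
  have hψ'm : ψ' m = 2 * ((m - s) / (2 * t)) - 2 * (m / (2 * t)) := by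
    rw [hψ' m, hms, hμ'e, hμ'e]; ring
  -- range facts
  have hφrange := ediv_diff m s t ht0 hs0 hst.le
  have hψ'range := ediv_diff m s (2 * t) h2t hs0 (by omega)
  have hψrange := ediv_diff (m + t) s (2 * t) h2t hs0 (by omega)
  have hshift : m + t - s = m - s + t := by ring
  rw [hshift] at hψrange
  -- sum identity
  have hsum : ψ m + ψ' m = 2 * φ m := by
    have h1 := hermite m t ht0
    have h2 := hermite (m - s) t ht0
    have h3 : m - s + t = m - s + t := rfl
    rw [hψm, hψ'm, hφm]
    omega
  have key : (φ m = 0 ∧ ψ m = 0 ∧ ψ' m = 0) ∨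
      (φ m = -1 ∧ ψ m = 0 ∧ ψ' m = -2) ∨ (φ m = -1 ∧ ψ m = -2 ∧ ψ' m = 0) := by
    rw [hφm, hψm, hψ'm] at *
    omega
  have hb2 : b ^ 2 + c ^ 2 > 0 := by positivity
  have hbne : b ≠ 0 := hb.ne'
  have hcne : c ≠ 0 := hc.ne'
  have hXne : b ^ 2 + c ^ 2 ≠ 0 := hb2.ne'
  rcases key with ⟨h1, h2, h3⟩ | ⟨h1, h2, h3⟩ | ⟨h1, h2, h3⟩ <;>
    rw [h1, h2, h3] <;>
    simp only [zpow_zero, zpow_neg, zpow_one, zpow_two] <;>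
    field_simp <;>
    ring
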